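/- Let X_1,…,X_G be real N_g × k matrices with each X_gᵀX_g invertible, let β ∈ ℝ^k, let ε_1,…,ε_G be arbitrary vectors with ε_g ∈ ℝ^{N_g}, set Y_g = X_g β + ε_g, β̂ = (1/G) Σ_{g=1}^G (X_gᵀX_g)⁻¹ X_gᵀ Y_g, and e_g = Y_g − X_g β̂. Then the following exact matrix identity holds: (1/G) Σ_{g=1}^G (X_gᵀX_g)⁻¹ X_gᵀ e_g e_gᵀ X_g (X_gᵀX_g)⁻¹ = (1/G) Σ_{g=1}^G (X_gᵀX_g)⁻¹ X_gᵀ ε_g ε_gᵀ X_g (X_gᵀX_g)⁻¹ − (β̂ − β)(β̂ − β)ᵀ. -/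

import Mathlib

open Matrix

lemma vecMulVec_smul_left' {m n : Type*} (c : ℝ) (u : m → ℝ) (v : n → ℝ) :
    vecMulVec (c • u) v = c • vecMulVec u v := by
  ext i j; simp [vecMulVec_apply, mul_assoc]

lemma vecMulVec_smul_right' {m n : Type*} (c : ℝ) (u : m → ℝ) (v : n → ℝ) :
    vecMulVec u (c • v) = c • vecMulVec u v := by
  ext i j; simp [vecMulVec_apply]; ring

lemma sandwich' {n k : ℕ} (M : Matrix (Fin k) (Fin n) ℝ) (v : Fin n → ℝ) :
    M * vecMulVec v v * Mᵀ = vecMulVec (M.mulVec v) (M.mulVec v) := by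
  ext i j
  simp only [mul_apply, vecMulVec_apply, mulVec, dotProduct, transpose_apply,
    Finset.sum_mul, Finset.mul_sum]
  apply Finset.sum_congr rfl; intro a _
  apply Finset.sum_congr rfl; intro b _
  ring

/-- exact decomposition of the variance estimator from the
proof of the paper's Theorem 3.  With `Y_g = X_g β + ε_g`,
`β̂ = (1/G)∑_g (X_gᵀX_g)⁻¹X_gᵀY_g` and residuals `e_g = Y_g − X_g β̂`,
`(1/G)∑_g (X_gᵀX_g)⁻¹X_gᵀ e_g e_gᵀ X_g (X_gᵀX_g)⁻¹
  = (1/G)∑_g (X_gᵀX_g)⁻¹X_gᵀ ε_g ε_gᵀ X_g (X_gᵀX_g)⁻¹ − (β̂−β)(β̂−β)ᵀ`. -/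
theorem stmt7 (G k : ℕ) (hG : 1 ≤ G) (N : Fin G → ℕ)
    (X : (g : Fin G) → Matrix (Fin (N g)) (Fin k) ℝ)
    (hX : ∀ g, IsUnit ((X g)ᵀ * X g).det)
    (β : Fin k → ℝ)
    (ε : (g : Fin G) → Fin (N g) → ℝ)
    (Y : (g : Fin G) → Fin (N g) → ℝ)
    (hY : ∀ g, Y g = (X g).mulVec β + ε g)
    (betaHat : Fin k → ℝ)
    (hbetaHat : betaHat =
      (G : ℝ)⁻¹ • ∑ g, (((X g)ᵀ * X g)⁻¹).mulVec ((X g)ᵀ.mulVec (Y g)))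
    (e : (g : Fin G) → Fin (N g) → ℝ)
    (he : ∀ g, e g = Y g - (X g).mulVec betaHat) :
    (G : ℝ)⁻¹ • ∑ g, ((X g)ᵀ * X g)⁻¹ * (X g)ᵀ * vecMulVec (e g) (e g) * X g *
        ((X g)ᵀ * X g)⁻¹
      = (G : ℝ)⁻¹ • ∑ g, ((X g)ᵀ * X g)⁻¹ * (X g)ᵀ * vecMulVec (ε g) (ε g) * X g *
          ((X g)ᵀ * X g)⁻¹
        - vecMulVec (betaHat - β) (betaHat - β) := by
  have hGne : (G : ℝ) ≠ 0 := by positivity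
  set A : (g : Fin G) → Matrix (Fin k) (Fin (N g)) ℝ :=
    fun g => ((X g)ᵀ * X g)⁻¹ * (X g)ᵀ with hA
  set u : (g : Fin G) → Fin k → ℝ := fun g => (A g).mulVec (ε g) with hu
  set δ : Fin k → ℝ := betaHat - β with hδ
  have hAapp : ∀ g, ((X g)ᵀ * X g)⁻¹ * (X g)ᵀ = A g := fun _ => rfl
  have hu' : ∀ g, (A g).mulVec (ε g) = u g := fun _ => rfl
  have hAT : ∀ g, (A g)ᵀ = X g * ((X g)ᵀ * X g)⁻¹ := by
    intro g
    rw [← hAapp, transpose_mul, transpose_transpose, transpose_nonsing_inv,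
      transpose_mul, transpose_transpose]
  have hAXv : ∀ g (w : Fin k → ℝ), (A g).mulVec ((X g).mulVec w) = w := by
    intro g w
    rw [← hAapp]
    rw [mulVec_mulVec, Matrix.mul_assoc, nonsing_inv_mul _ (hX g), one_mulVec]
  have hsum_u : ∑ g, u g = (G : ℝ) • δ := by
    have h1 : ∀ g, (((X g)ᵀ * X g)⁻¹).mulVec ((X g)ᵀ.mulVec (Y g)) = β + u g := by
      intro g
      rw [hY g, mulVec_add, mulVec_add]
      simp only [mulVec_mulVec]
      rw [nonsing_inv_mul _ (hX g), one_mulVec, hAapp, hu']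
    have h3 : betaHat = β + (G : ℝ)⁻¹ • ∑ g, u g := by
      rw [hbetaHat]
      simp only [h1]
      rw [Finset.sum_add_distrib, Finset.sum_const, Finset.card_univ, Fintype.card_fin,
        smul_add, ← Nat.cast_smul_eq_nsmul ℝ, smul_smul, inv_mul_cancel₀ hGne, one_smul]
    rw [hδ, h3, add_sub_cancel_left, smul_smul, mul_inv_cancel₀ hGne, one_smul]
  have he' : ∀ g, (A g).mulVec (e g) = u g - δ := by
    intro g
    rw [he g, hY g, hδ]
    have h4 : (X g).mulVec β + ε g - (X g).mulVec betaHat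
        = ε g - (X g).mulVec (betaHat - β) := by
      rw [mulVec_sub]; abel
    rw [h4, mulVec_sub, hAXv, hu']
  have hterm : ∀ (v : (g : Fin G) → Fin (N g) → ℝ) (g : Fin G),
      ((X g)ᵀ * X g)⁻¹ * (X g)ᵀ * vecMulVec (v g) (v g) * X g * ((X g)ᵀ * X g)⁻¹
        = vecMulVec ((A g).mulVec (v g)) ((A g).mulVec (v g)) := by
    intro v g
    rw [← sandwich' (A g) (v g), hAT g, ← hAapp, ← Matrix.mul_assoc]
  simp only [hterm e, hterm ε, he', hu']
  have hexp : ∀ g, vecMulVec (u g - δ) (u g - δ)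
      = vecMulVec (u g) (u g) - vecMulVec (u g) δ - vecMulVec δ (u g)
        + vecMulVec δ δ := by
    intro g
    ext i j
    simp only [vecMulVec_apply, Pi.sub_apply, Matrix.sub_apply, Matrix.add_apply]
    ring
  simp only [hexp]
  rw [Finset.sum_add_distrib, Finset.sum_sub_distrib, Finset.sum_sub_distrib]
  have hsl : ∑ g, vecMulVec (u g) δ = (G : ℝ) • vecMulVec δ δ := by
    have h4 : ∑ g, vecMulVec (u g) δ = vecMulVec (∑ g, u g) δ := by
      ext i j
      simp [vecMulVec_apply, Matrix.sum_apply, Finset.sum_apply, Finset.sum_mul]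
    rw [h4, hsum_u, vecMulVec_smul_left']
  have hsr : ∑ g, vecMulVec δ (u g) = (G : ℝ) • vecMulVec δ δ := by
    have h5 : ∑ g, vecMulVec δ (u g) = vecMulVec δ (∑ g, u g) := by
      ext i j
      simp [vecMulVec_apply, Matrix.sum_apply, Finset.sum_apply, Finset.mul_sum]
    rw [h5, hsum_u, vecMulVec_smul_right']
  rw [hsl, hsr, Finset.sum_const, Finset.card_univ, Fintype.card_fin,
    ← Nat.cast_smul_eq_nsmul ℝ]
  rw [smul_add, smul_sub, smul_sub]
  simp only [smul_smul, inv_mul_cancel₀ hGne, one_smul]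
  abel
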